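/- Let G be a graph, r a positive integer, C an r-identifying code in G, C' a nonempty subset of C, and c ∈ C'. Let I_1, ..., I_k be the distinct sets among {I_r(C';u) : u ∈ B_r(c)}, and let i_j be the number of vertices u ∈ B_r(c) with I_r(C';u) = I_j. Then s_r(C;c) ≤ Σ_{j=1}^{k} ( 1/|I_j| + (i_j - 1)/(|I_j| + 1) ). -/

import Mathlib

open scoped Classical

noncomputable section

variable {V : Type*}

/-- The ball of radius `r` around `c` in a graph `G`. -/
def gBall [Fintype V] (G : SimpleGraph V) (r : ℕ) (c : V) : Finset V :=
  Finset.univ.filter (fun u => G.dist c u ≤ r)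

/-- The identifying set `I_r(C;u) = B_r(u) ∩ C`. -/
def gIset [Fintype V] (G : SimpleGraph V) (r : ℕ) (C : Finset V) (u : V) : Finset V :=
  (gBall G r u).filter (fun x => x ∈ C)

/-- The share `s_r(C;c)`. -/
def gShare [Fintype V] (G : SimpleGraph V) (r : ℕ) (C : Finset V) (c : V) : ℝ :=
  ∑ u ∈ gBall G r c, (1 : ℝ) / (gIset G r C u).card

/-- Share-estimation lemma: for an `r`-identifying code `C`, a nonempty subset `C' ⊆ C`
and `c ∈ C'`, the share of `c` is bounded using the distinct `I`-sets with respect to `C'`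
of the vertices in `B_r(c)` and their multiplicities. -/
theorem share_estimation [Fintype V] (G : SimpleGraph V) (hG : G.Connected)
    (r : ℕ) (hr : 0 < r) (C : Finset V)
    (hid : (∀ u : V, (gIset G r C u).Nonempty) ∧
      ∀ u v : V, gIset G r C u = gIset G r C v → u = v)
    (C' : Finset V) (hsub : C' ⊆ C) (hne : C'.Nonempty) (c : V) (hc : c ∈ C') :
    gShare G r C c ≤
      ∑ I ∈ (gBall G r c).image (fun u => gIset G r C' u),
        (1 / (I.card : ℝ) +
          ((((gBall G r c).filter (fun u => gIset G r C' u = I)).card : ℝ) - 1) /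
            ((I.card : ℝ) + 1)) := by
  classical
  rw [gShare, ← Finset.sum_fiberwise_of_maps_to
    (t := (gBall G r c).image (fun u => gIset G r C' u))
    (g := fun u => gIset G r C' u)
    (fun x hx => Finset.mem_image_of_mem _ hx)
    (fun u => (1:ℝ) / (gIset G r C u).card)]
  apply Finset.sum_le_sum
  intro I hI
  obtain ⟨u0, hu0, hu0I⟩ := Finset.mem_image.mp hI
  set S := (gBall G r c).filter (fun u => gIset G r C' u = I) with hS
  have hcI : c ∈ I := by
    rw [← hu0I, gIset, Finset.mem_filter, gBall, Finset.mem_filter]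
    refine ⟨⟨Finset.mem_univ _, ?_⟩, hc⟩
    rw [SimpleGraph.dist_comm]
    simpa [gBall] using hu0
  have hIcard : 1 ≤ I.card := Finset.card_pos.mpr ⟨c, hcI⟩
  have ha : (0:ℝ) < I.card := by exact_mod_cast hIcard
  have ha1 : (1:ℝ) ≤ I.card := by exact_mod_cast hIcard
  have hsubI : ∀ u ∈ S, I ⊆ gIset G r C u := by
    intro u hu
    have := (Finset.mem_filter.mp hu).2
    rw [← this]
    intro x hx
    rw [gIset, Finset.mem_filter] at hx ⊢
    exact ⟨hx.1, hsub hx.2⟩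
  set T := S.filter (fun u => gIset G r C u = I) with hT
  have hTone : T.card ≤ 1 := by
    rw [Finset.card_le_one]
    intro a ha' b hb'
    have h1 := (Finset.mem_filter.mp ha').2
    have h2 := (Finset.mem_filter.mp hb').2
    exact hid.2 a b (h1.trans h2.symm)
  have hTsub : T ⊆ S := Finset.filter_subset _ _
  have hTS : T.card ≤ S.card := Finset.card_le_card hTsub
  have hS1 : 1 ≤ S.card := Finset.card_pos.mpr ⟨u0, Finset.mem_filter.mpr ⟨hu0, hu0I⟩⟩
  have hsplit := Finset.sum_filter_add_sum_filter_not S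
    (fun u => gIset G r C u = I) (fun u => (1:ℝ) / (gIset G r C u).card)
  rw [← hsplit]
  have hcard : (S.filter (fun u => ¬ gIset G r C u = I)).card = S.card - T.card := by
    have h := Finset.card_filter_add_card_filter_not (s := S)
      (p := fun u => gIset G r C u = I)
    rw [hT]
    omega
  have hTsum : ∑ u ∈ T, (1:ℝ) / (gIset G r C u).card = T.card * (1 / I.card) := by
    rw [Finset.sum_congr rfl (fun u hu => by rw [(Finset.mem_filter.mp hu).2])]
    simp [Finset.sum_const, mul_comm]
  have hT'sum : ∑ u ∈ S.filter (fun u => ¬ gIset G r C u = I), (1:ℝ) / (gIset G r C u).card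
      ≤ ((S.card : ℝ) - T.card) * (1 / ((I.card : ℝ) + 1)) := by
    calc ∑ u ∈ S.filter (fun u => ¬ gIset G r C u = I), (1:ℝ) / (gIset G r C u).card
        ≤ ∑ _u ∈ S.filter (fun u => ¬ gIset G r C u = I), (1:ℝ) / ((I.card : ℝ) + 1) := by
          apply Finset.sum_le_sum
          intro u hu
          have humem := Finset.mem_filter.mp hu
          have hss : I ⊂ gIset G r C u :=
            Finset.ssubset_iff_subset_ne.mpr ⟨hsubI u humem.1, fun h => humem.2 h.symm⟩
          have hlt : I.card + 1 ≤ (gIset G r C u).card := Finset.card_lt_card hss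
          apply one_div_le_one_div_of_le (by positivity)
          exact_mod_cast hlt
      _ = ((S.card : ℝ) - T.card) * (1 / ((I.card : ℝ) + 1)) := by
          rw [Finset.sum_const, hcard, nsmul_eq_mul, Nat.cast_sub hTS]
  calc ∑ u ∈ T, (1:ℝ) / (gIset G r C u).card
        + ∑ u ∈ S.filter (fun u => ¬ gIset G r C u = I), (1:ℝ) / (gIset G r C u).card
      ≤ (T.card : ℝ) * (1 / I.card) + ((S.card : ℝ) - T.card) * (1 / ((I.card : ℝ) + 1)) := by
        rw [hTsum]; exact add_le_add_right hT'sum _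
    _ ≤ 1 / (I.card : ℝ) + ((S.card : ℝ) - 1) / ((I.card : ℝ) + 1) := by
        have hdiv : (1:ℝ) / ((I.card : ℝ) + 1) ≤ 1 / I.card :=
          one_div_le_one_div_of_le ha (by linarith)
        have hkey : ((S.card : ℝ) - 1) / ((I.card : ℝ) + 1)
            = ((S.card : ℝ) - 1) * (1 / ((I.card : ℝ) + 1)) := by ring
        interval_cases h : T.card
        · push_cast
          linarith
        · push_cast
          linarith
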